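/- Let u : ℝ² → ℝ be continuously differentiable with sup_{|x|≥1} |∇u(x)| ≤ C for some constant C, u(x) ≤ 0 for all x, and suppose the function x ↦ 1 - e^{u(x)} is integrable on ℝ². Then u(x) → 0 as |x| → ∞. -/

import Mathlib

open Real Filter MeasureTheory Metric Set

theorem stmt2 (u : EuclideanSpace ℝ (Fin 2) → ℝ) (C : ℝ)
    (hu : ContDiff ℝ 1 u)
    (hgrad : ∀ x, 1 ≤ ‖x‖ → ‖fderiv ℝ u x‖ ≤ C)
    (hneg : ∀ x, u x ≤ 0)
    (hint : Integrable (fun x => 1 - Real.exp (u x))) :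
    Tendsto u (cocompact (EuclideanSpace ℝ (Fin 2))) (nhds 0) := by
  set f : EuclideanSpace ℝ (Fin 2) → ℝ := fun x => 1 - Real.exp (u x) with hf
  have hf0 : ∀ x, 0 ≤ f x := fun x =>
    sub_nonneg.2 (Real.exp_le_one_iff.2 (hneg x))
  rw [Metric.tendsto_nhds]
  intro ε hε
  by_contra hcon
  rw [Filter.not_eventually] at hcon
  set K := max C 1 with hKdef
  have hK : 0 < K := lt_of_lt_of_le one_pos (le_max_right _ _)
  set r := ε / (2 * K) with hrdef
  have hrpos : 0 < r := div_pos hε (by positivity)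
  set δ := 1 - Real.exp (-(ε / 2)) with hδdef
  have hδ : 0 < δ := by
    have : Real.exp (-(ε / 2)) < 1 := Real.exp_lt_one_iff.2 (by linarith)
    simp [hδdef]; linarith
  have hballfin : volume (Metric.ball (0 : EuclideanSpace ℝ (Fin 2)) r) ≠ ⊤ := measure_ball_lt_top.ne
  have hballpos : 0 < (volume (Metric.ball (0 : EuclideanSpace ℝ (Fin 2)) r)).toReal :=
    ENNReal.toReal_pos (Metric.measure_ball_pos volume 0 hrpos).ne' hballfin
  set c := δ * (volume (Metric.ball (0 : EuclideanSpace ℝ (Fin 2)) r)).toReal with hcdef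
  have hc : 0 < c := mul_pos hδ hballpos
  -- Lemma A : the integral over a small ball around a bad point far away is at least c
  have hA : ∀ x₀ : EuclideanSpace ℝ (Fin 2), 1 + r ≤ ‖x₀‖ → u x₀ ≤ -ε →
      c ≤ ∫ y in Metric.ball x₀ r, f y := by
    intro x₀ hx₀ hux₀
    have hsub : Metric.ball x₀ r ⊆ {y : EuclideanSpace ℝ (Fin 2) | 1 ≤ ‖y‖} := by
      intro y hy
      have h1 : ‖x₀ - y‖ < r := by
        have := mem_ball.1 hy
        rwa [dist_comm, dist_eq_norm] at this
      have h2 : ‖x₀‖ - ‖y‖ ≤ ‖x₀ - y‖ := norm_sub_norm_le _ _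
      simp only [Set.mem_setOf_eq]
      linarith
    have hu2 : ∀ y ∈ Metric.ball x₀ r, u y ≤ -(ε / 2) := by
      intro y hy
      have hx₀mem : x₀ ∈ Metric.ball x₀ r := mem_ball_self hrpos
      have hlip := (convex_ball x₀ r).norm_image_sub_le_of_norm_fderiv_le
        (f := u) (C := K) (fun z _ => (hu.differentiable one_ne_zero).differentiableAt)
        (fun z hz => le_trans (hgrad z (hsub hz)) (le_max_left _ _)) hx₀mem hy
      have hyr : ‖y - x₀‖ ≤ r := by
        have := mem_ball.1 hy
        rw [dist_eq_norm] at this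
        linarith
      have : ‖u y - u x₀‖ ≤ K * r :=
        le_trans hlip (mul_le_mul_of_nonneg_left hyr hK.le)
      have hKr : K * r = ε / 2 := by
        rw [hrdef]; field_simp
      rw [hKr] at this
      have := (abs_le.1 this).2
      linarith
    have hδf : ∀ y ∈ Metric.ball x₀ r, δ ≤ f y := by
      intro y hy
      have := Real.exp_le_exp.2 (hu2 y hy)
      simp only [hf, hδdef]
      linarith
    have hint' : IntegrableOn f (Metric.ball x₀ r) volume := hint.integrableOn
    have := setIntegral_ge_of_const_le (μ := volume) measurableSet_ball
      measure_ball_lt_top.ne hδf hint'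
    have hvol : volume (Metric.ball x₀ r) = volume (Metric.ball (0 : EuclideanSpace ℝ (Fin 2)) r) :=
      Measure.addHaar_ball_center volume x₀ r
    rw [measureReal_def, hvol, smul_eq_mul, mul_comm] at this
    exact this
  -- tail of the integral
  have hmono := tendsto_setIntegral_of_monotone (μ := volume)
    (s := fun n : ℕ => Metric.closedBall (0 : EuclideanSpace ℝ (Fin 2)) n)
    (fun n => measurableSet_closedBall)
    (fun m n hmn => Metric.closedBall_subset_closedBall (by exact_mod_cast hmn))
    (by rw [iUnion_closedBall_nat]; exact hint.integrableOn)
  rw [iUnion_closedBall_nat, setIntegral_univ] at hmono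
  obtain ⟨N, hN⟩ := (hmono.eventually (eventually_gt_nhds
    (show (∫ x, f x) - c < ∫ x, f x by linarith))).exists
  have hcompl : ∫ y in (Metric.closedBall (0 : EuclideanSpace ℝ (Fin 2)) N)ᶜ, f y < c := by
    have hsplit := integral_add_compl (measurableSet_closedBall
      (x := (0 : EuclideanSpace ℝ (Fin 2))) (ε := (N : ℝ))) hint
    linarith
  -- pick a bad point far away
  obtain ⟨x₀, hx₀mem, hx₀bad⟩ := (Filter.hasBasis_cocompact.frequently_iff).1 hcon
    (Metric.closedBall (0 : EuclideanSpace ℝ (Fin 2)) (N + 1 + r)) (isCompact_closedBall _ _)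
  have hx₀norm : N + 1 + r < ‖x₀‖ := by
    have := hx₀mem
    simp only [Set.mem_compl_iff, Metric.mem_closedBall, dist_zero_right, not_le] at this
    exact this
  have hNnn : (0 : ℝ) ≤ N := Nat.cast_nonneg N
  have hux₀ : u x₀ ≤ -ε := by
    have habs : ε ≤ |u x₀| := by
      rw [Real.dist_eq, sub_zero] at hx₀bad
      linarith [not_lt.1 hx₀bad]
    rw [abs_of_nonpos (hneg x₀)] at habs
    linarith
  have hAx₀ := hA x₀ (by linarith) hux₀
  have hsub2 : Metric.ball x₀ r ⊆ (Metric.closedBall (0 : EuclideanSpace ℝ (Fin 2)) N)ᶜ := by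
    intro y hy
    have h1 : ‖x₀ - y‖ < r := by
      have := mem_ball.1 hy
      rwa [dist_comm, dist_eq_norm] at this
    have h2 : ‖x₀‖ - ‖y‖ ≤ ‖x₀ - y‖ := norm_sub_norm_le _ _
    simp only [Set.mem_compl_iff, Metric.mem_closedBall, dist_zero_right, not_le]
    linarith
  have hmono2 : ∫ y in Metric.ball x₀ r, f y ≤ ∫ y in (Metric.closedBall (0 : EuclideanSpace ℝ (Fin 2)) N)ᶜ, f y :=
    setIntegral_mono_set hint.integrableOn
      (Filter.Eventually.of_forall fun y => hf0 y) (HasSubset.Subset.eventuallyLE hsub2)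
  linarith
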